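/- Let m ≥ 2 be an integer, let k₁, k₂ be real numbers, and let r > 0 satisfy 4k₁ < π²/r² and k₂ < π²/r². Then (4m−4)·G(k₂, r) + 6·G(k₁, 2r) ≤ (4m−1)·G((12k₁ + (4m−4)k₂)/(4m−1), r). (This is the inequality showing that the quaternion Kähler drift term (4m−4)G(k₂,r) + 6G(k₁,2r) is dominated by the Riemannian drift term with the averaged Ricci lower bound 12k₁ + (4m−4)k₂ in real dimension 4m.) -/

import Mathlib

open Real

/-- The comparison function `G` from Chen–Wang:
`G(k,r) = −2√k tan(√k r/2)` for `k > 0`, `G(0,r) = 0`,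
and `G(k,r) = 2√|k| tanh(√|k| r/2)` for `k < 0`. -/
noncomputable def G (k r : ℝ) : ℝ :=
  if 0 < k then -2 * Real.sqrt k * Real.tan (Real.sqrt k * r / 2)
  else if k = 0 then 0
  else 2 * Real.sqrt |k| * Real.tanh (Real.sqrt |k| * r / 2)




-- basic tanh facts
lemma my_hasDerivAt_tanh (x : ℝ) : HasDerivAt Real.tanh (1 - Real.tanh x ^ 2) x := by
  have h := (Real.hasDerivAt_sinh x).div (Real.hasDerivAt_cosh x) (Real.cosh_pos x).ne'
  have hfun : Real.sinh / Real.cosh = Real.tanh := by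
    funext y; rw [Pi.div_apply, Real.tanh_eq_sinh_div_cosh]
  rw [hfun] at h
  refine h.congr_deriv ?_
  have hc := (Real.cosh_pos x).ne'
  rw [Real.tanh_eq_sinh_div_cosh]
  have h1 := Real.cosh_sq_sub_sinh_sq x
  field_simp

lemma my_tanh_lt_one (x : ℝ) : Real.tanh x ^ 2 < 1 := by
  rw [Real.tanh_eq_sinh_div_cosh, div_pow]
  rw [div_lt_one (by positivity)]
  nlinarith [Real.cosh_sq_sub_sinh_sq x]

lemma my_tanh_le_self {x : ℝ} (hx : 0 ≤ x) : Real.tanh x ≤ x := by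
  rw [Real.tanh_eq_sinh_div_cosh, div_le_iff₀ (Real.cosh_pos x)]
  -- sinh x ≤ x * cosh x
  have key : ∀ y ∈ Set.Ici (0:ℝ), Real.sinh y - y * Real.cosh y ≤ 0 := by
    intro y hy
    have hmono : AntitoneOn (fun y => Real.sinh y - y * Real.cosh y) (Set.Ici 0) := by
      apply antitoneOn_of_deriv_nonpos (convex_Ici 0)
      · fun_prop
      · intro z hz
        exact ((Real.hasDerivAt_sinh z).sub
          ((hasDerivAt_id z).mul (Real.hasDerivAt_cosh z))).differentiableAt.differentiableWithinAt
      · intro z hz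
        rw [interior_Ici] at hz
        have hd : HasDerivAt (fun y => Real.sinh y - y * Real.cosh y)
            (Real.cosh z - (1 * Real.cosh z + z * Real.sinh z)) z :=
          (Real.hasDerivAt_sinh z).sub ((hasDerivAt_id z).mul (Real.hasDerivAt_cosh z))
        rw [hd.deriv]
        have : 0 ≤ z * Real.sinh z := mul_nonneg hz.le (by simpa using Real.sinh_nonneg_iff.2 hz.le)
        linarith
    have := hmono (Set.self_mem_Ici) hy (by simpa using hy)
    simpa using this
  have := key x hx
  linarith

lemma my_tanh_ge {x : ℝ} (hx : 0 ≤ x) : x - x ^ 3 ≤ Real.tanh x := by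
  have key : MonotoneOn (fun y => Real.tanh y - y + y ^ 3) (Set.Ici 0) := by
    apply monotoneOn_of_deriv_nonneg (convex_Ici 0)
    · intro z hz
      exact ((((my_hasDerivAt_tanh z).sub (hasDerivAt_id z)).add
        (hasDerivAt_pow 3 z)).continuousAt).continuousWithinAt
    · intro z hz
      exact (((my_hasDerivAt_tanh z).sub (hasDerivAt_id z)).add
        ((hasDerivAt_pow 3 z))).differentiableAt.differentiableWithinAt
    · intro z hz
      rw [interior_Ici] at hz
      have hd : HasDerivAt (fun y => Real.tanh y - y + y ^ 3)
          ((1 - Real.tanh z ^ 2 - 1) + 3 * z ^ 2) z := by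
        have := ((my_hasDerivAt_tanh z).sub (hasDerivAt_id z)).add (hasDerivAt_pow 3 z)
        simp at this ⊢; exact this
      rw [hd.deriv]
      have h1 : Real.tanh z ≤ z := my_tanh_le_self hz.le
      have h2 : 0 ≤ Real.tanh z := by
        rw [Real.tanh_eq_sinh_div_cosh]
        exact div_nonneg (Real.sinh_nonneg_iff.2 hz.le) (Real.cosh_pos z).le
      nlinarith
  have := key Set.self_mem_Ici (by simpa using hx) hx
  simp only [Real.tanh_zero] at this
  nlinarith [this]


-- tan u - u ≤ u^3 for u ∈ [0, 1/2]
lemma my_tan_sub_le {u : ℝ} (h0 : 0 ≤ u) (h1 : u ≤ 1/2) : Real.tan u - u ≤ u ^ 3 := by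
  rcases eq_or_lt_of_le h0 with rfl | hu
  · simp
  have hcos : 1 - u ^ 2 / 2 ≤ Real.cos u := Real.one_sub_sq_div_two_le_cos
  have hcos2 : (1:ℝ)/2 ≤ Real.cos u := by nlinarith
  have hsin : Real.sin u < u := Real.sin_lt hu
  have htan : Real.tan u = Real.sin u / Real.cos u := Real.tan_eq_sin_div_cos u
  rw [htan, div_sub' (by linarith : (0:ℝ) < Real.cos u).ne', div_le_iff₀ (by linarith)]
  -- sin u - u * cos u ≤ u^3 * cos u
  have h2 : Real.sin u - u * Real.cos u ≤ u - u * Real.cos u := by nlinarith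
  have h3 : u - u * Real.cos u = u * (1 - Real.cos u) := by ring
  have h4 : 1 - Real.cos u ≤ u ^ 2 / 2 := by linarith
  nlinarith [mul_nonneg hu.le (sq_nonneg u)]

-- monotonicity of tan u / u on (0, π/2)
lemma my_tan_div_mono : MonotoneOn (fun u => Real.tan u / u) (Set.Ioo 0 (π/2)) := by
  apply monotoneOn_of_deriv_nonneg (convex_Ioo 0 (π/2))
  · intro z hz
    have hc : Real.cos z ≠ 0 := (Real.cos_pos_of_mem_Ioo
      ⟨by linarith [hz.1, Real.pi_pos], hz.2⟩).ne'
    exact (((Real.hasDerivAt_tan hc).div ((hasDerivAt_id' (𝕜 := ℝ) z)) hz.1.ne').continuousAt).continuousWithinAt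
  · rw [interior_Ioo]
    intro z hz
    have hc : Real.cos z ≠ 0 := (Real.cos_pos_of_mem_Ioo ⟨by linarith [hz.1, Real.pi_pos], hz.2⟩).ne'
    exact ((Real.hasDerivAt_tan hc).div ((hasDerivAt_id' (𝕜 := ℝ) z)) hz.1.ne').differentiableAt.differentiableWithinAt
  · rw [interior_Ioo]
    intro z hz
    have hcpos : 0 < Real.cos z := Real.cos_pos_of_mem_Ioo ⟨by linarith [hz.1, Real.pi_pos], hz.2⟩
    have hc : Real.cos z ≠ 0 := hcpos.ne'
    have hd := (Real.hasDerivAt_tan hc).div ((hasDerivAt_id' (𝕜 := ℝ) z)) hz.1.ne'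
    rw [show (fun u => Real.tan u / u) = (Real.tan / fun x => x) from rfl, hd.deriv]
    have hsin : Real.sin z < z := Real.sin_lt hz.1
    have hsinpos : 0 < Real.sin z := Real.sin_pos_of_pos_of_lt_pi hz.1 (by linarith [Real.pi_pos, hz.2])
    have htan : Real.tan z = Real.sin z / Real.cos z := Real.tan_eq_sin_div_cos z
    rw [htan]
    have hz2 : (0:ℝ) < z ^ 2 := pow_pos hz.1 2
    apply div_nonneg _ (sq_nonneg z)
    have key : Real.sin z / Real.cos z ≤ z / Real.cos z ^ 2 := by
      rw [div_le_div_iff₀ hcpos (pow_pos hcpos 2)]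
      have hcos1 : Real.cos z ≤ 1 := Real.cos_le_one z
      nlinarith [mul_pos hz.1 hcpos, mul_pos hsinpos hcpos]
    have heq : 1 / Real.cos z ^ 2 * z = z / Real.cos z ^ 2 := by ring
    linarith [key]

-- monotonicity of sec^2 on (0, π/2): direct
lemma my_sec_sq_mono {a b : ℝ} (ha : 0 < a) (hab : a ≤ b) (hb : b < π/2) :
    1 / Real.cos a ^ 2 ≤ 1 / Real.cos b ^ 2 := by
  have hcb : 0 < Real.cos b := Real.cos_pos_of_mem_Ioo ⟨by linarith, hb⟩
  have hca : 0 < Real.cos a := Real.cos_pos_of_mem_Ioo ⟨by linarith, by linarith⟩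
  have : Real.cos b ≤ Real.cos a :=
    Real.cos_le_cos_of_nonneg_of_le_pi ha.le (by linarith [Real.pi_pos, Real.pi_gt_three]) hab
  gcongr



lemma my_tanh_mono : StrictMono Real.tanh := by
  apply strictMono_of_deriv_pos
  intro x
  rw [(my_hasDerivAt_tanh x).deriv]
  linarith [my_tanh_lt_one x]

lemma my_tanh_div_anti : AntitoneOn (fun u => Real.tanh u / u) (Set.Ioi 0) := by
  apply antitoneOn_of_deriv_nonpos (convex_Ioi 0)
  · intro z hz
    exact (((my_hasDerivAt_tanh z).div (hasDerivAt_id' (𝕜 := ℝ) z)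
      (ne_of_gt hz)).continuousAt).continuousWithinAt
  · rw [interior_Ioi]
    intro z hz
    exact ((my_hasDerivAt_tanh z).div (hasDerivAt_id' (𝕜 := ℝ) z)
      (ne_of_gt hz)).differentiableAt.differentiableWithinAt
  · rw [interior_Ioi]
    intro z hz
    have hd := (my_hasDerivAt_tanh z).div (hasDerivAt_id' (𝕜 := ℝ) z) (ne_of_gt hz)
    rw [show (fun u => Real.tanh u / u) = (Real.tanh / fun x => x) from rfl, hd.deriv]
    apply div_nonpos_of_nonpos_of_nonneg _ (sq_nonneg z)
    have hs : z < Real.sinh z := Real.self_lt_sinh_iff.2 hz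
    have hc : 1 ≤ Real.cosh z := Real.one_le_cosh z
    have hcp : 0 < Real.cosh z := Real.cosh_pos z
    have ht : Real.tanh z = Real.sinh z / Real.cosh z := Real.tanh_eq_sinh_div_cosh z
    have hid : Real.cosh z ^ 2 - Real.sinh z ^ 2 = 1 := Real.cosh_sq_sub_sinh_sq z
    rw [ht]
    have key : (1 - (Real.sinh z / Real.cosh z) ^ 2) = 1 / Real.cosh z ^ 2 := by
      field_simp
      exact hid
    rw [key]
    have h2 : 1 / Real.cosh z ^ 2 * z - Real.sinh z / Real.cosh z * 1
        = (z - Real.sinh z * Real.cosh z) / Real.cosh z ^ 2 := by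
      field_simp
    rw [h2]
    apply div_nonpos_of_nonpos_of_nonneg _ (by positivity)
    have hsp : 0 < Real.sinh z := lt_trans hz hs
    nlinarith [mul_le_mul_of_nonneg_left hc hsp.le]

lemma G_of_pos {k : ℝ} (hk : 0 < k) (r : ℝ) :
    G k r = -2 * Real.sqrt k * Real.tan (Real.sqrt k * r / 2) := if_pos hk

lemma G_of_zero (r : ℝ) : G 0 r = 0 := by simp [G]

lemma G_of_neg {k : ℝ} (hk : k < 0) (r : ℝ) :
    G k r = 2 * Real.sqrt (-k) * Real.tanh (Real.sqrt (-k) * r / 2) := by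
  rw [G, if_neg (by linarith), if_neg (by linarith), abs_of_neg hk]

lemma sqrt_four : Real.sqrt 4 = 2 := by
  rw [show (4:ℝ) = 2^2 by norm_num, Real.sqrt_sq (by norm_num)]

lemma G_doubling (k r : ℝ) : G (4*k) r = 2 * G k (2*r) := by
  rcases lt_trichotomy k 0 with hk | rfl | hk
  · rw [G_of_neg (by linarith) r, G_of_neg hk (2*r)]
    have h4 : -(4*k) = 4 * (-k) := by ring
    rw [h4, Real.sqrt_mul (by norm_num) (-k), sqrt_four]
    ring_nf
  · norm_num [G_of_zero]
  · rw [G_of_pos (by linarith) r, G_of_pos hk (2*r)]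
    rw [Real.sqrt_mul (by norm_num) k, sqrt_four]
    ring_nf

noncomputable def Gd (r k : ℝ) : ℝ :=
  if 0 < k then
    -(Real.tan (Real.sqrt k * r / 2) / Real.sqrt k) - r / 2 * (1 / Real.cos (Real.sqrt k * r / 2) ^ 2)
  else if k = 0 then -r
  else -(Real.tanh (Real.sqrt (-k) * r / 2) / Real.sqrt (-k))
    - r / 2 * (1 - Real.tanh (Real.sqrt (-k) * r / 2) ^ 2)

lemma sqrt_lt_pi_div (hr : 0 < r) {k : ℝ} (hk : 0 < k) (hk' : k < π^2/r^2) :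
    Real.sqrt k * r / 2 < π / 2 := by
  have h1 : Real.sqrt k < π / r := by
    rw [show π / r = Real.sqrt ((π/r)^2) by rw [Real.sqrt_sq (by positivity)]]
    apply Real.sqrt_lt_sqrt hk.le
    rw [div_pow]; exact hk'
  have h2 : Real.sqrt k * r < π := by
    have := mul_lt_mul_of_pos_right h1 hr
    rwa [div_mul_cancel₀ _ hr.ne'] at this
  linarith

lemma hasDerivAt_G_pos {r k : ℝ} (hr : 0 < r) (hk : 0 < k) (hk' : k < π^2/r^2) :
    HasDerivAt (fun x => G x r) (Gd r k) k := by
  have hsk : 0 < Real.sqrt k := Real.sqrt_pos.2 hk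
  have hu1 : 0 < Real.sqrt k * r / 2 := by positivity
  have hu2 : Real.sqrt k * r / 2 < π / 2 := sqrt_lt_pi_div hr hk hk'
  have hcos : Real.cos (Real.sqrt k * r / 2) ≠ 0 :=
    (Real.cos_pos_of_mem_Ioo ⟨by linarith [Real.pi_pos], hu2⟩).ne'
  have hsq := Real.hasDerivAt_sqrt hk.ne'
  have harg : HasDerivAt (fun x => Real.sqrt x * r / 2) (1 / (2 * Real.sqrt k) * r / 2) k :=
    (hsq.mul_const r).div_const 2
  have htan : HasDerivAt (fun x => Real.tan (Real.sqrt x * r / 2))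
      (1 / Real.cos (Real.sqrt k * r / 2) ^ 2 * (1 / (2 * Real.sqrt k) * r / 2)) k :=
    HasDerivAt.comp k (Real.hasDerivAt_tan hcos) harg
  have hF := (hsq.const_mul (-2)).mul htan
  have heq : (fun x => G x r) =ᶠ[nhds k] fun x => -2 * Real.sqrt x * Real.tan (Real.sqrt x * r / 2) := by
    filter_upwards [isOpen_Ioi.mem_nhds hk] with x hx
    exact G_of_pos hx r
  apply HasDerivAt.congr_of_eventuallyEq _ heq
  refine hF.congr_deriv ?_
  rw [Gd, if_pos hk]
  field_simp
  ring

lemma hasDerivAt_G_neg {r k : ℝ} (hr : 0 < r) (hk : k < 0) :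
    HasDerivAt (fun x => G x r) (Gd r k) k := by
  have hnk : 0 < -k := by linarith
  have hsk : 0 < Real.sqrt (-k) := Real.sqrt_pos.2 hnk
  have hsq : HasDerivAt (fun x : ℝ => Real.sqrt (-x)) (1 / (2 * Real.sqrt (-k)) * (-1)) k :=
    (Real.hasDerivAt_sqrt hnk.ne').comp k (hasDerivAt_neg k)
  have harg : HasDerivAt (fun x => Real.sqrt (-x) * r / 2) (1 / (2 * Real.sqrt (-k)) * (-1) * r / 2) k :=
    (hsq.mul_const r).div_const 2
  have htanh : HasDerivAt (fun x => Real.tanh (Real.sqrt (-x) * r / 2))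
      ((1 - Real.tanh (Real.sqrt (-k) * r / 2) ^ 2) * (1 / (2 * Real.sqrt (-k)) * (-1) * r / 2)) k :=
    (my_hasDerivAt_tanh _).comp k harg
  have hF := (hsq.const_mul 2).mul htanh
  have heq : (fun x => G x r) =ᶠ[nhds k] fun x => 2 * Real.sqrt (-x) * Real.tanh (Real.sqrt (-x) * r / 2) := by
    filter_upwards [isOpen_Iio.mem_nhds hk] with x hx
    exact G_of_neg hx r
  apply HasDerivAt.congr_of_eventuallyEq _ heq
  refine hF.congr_deriv ?_
  rw [Gd, if_neg (by linarith), if_neg (by linarith)]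
  field_simp
  ring


lemma G_bound_near_zero {r : ℝ} (hr : 0 < r) {x : ℝ} (hx : |x| ≤ 1 / r^2) :
    |G x r - (-r) * x| ≤ r^3/4 * x^2 := by
  rcases lt_trichotomy x 0 with h | rfl | h
  · -- negative side
    have hnx : 0 < -x := by linarith
    set s := Real.sqrt (-x) with hs
    have hs0 : 0 < s := Real.sqrt_pos.2 hnx
    have hs2 : s^2 = -x := Real.sq_sqrt hnx.le
    set u := s * r / 2 with hu
    have hu0 : 0 < u := by positivity
    have h1 : G x r - (-r) * x = 2 * s * (Real.tanh u - u) := by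
      rw [G_of_neg h r, ← hs, ← hu]
      have : r * x = -(2 * s * u) * s / s := by
        field_simp
        nlinarith [hs2]
      nlinarith [this]
    rw [h1]
    have h2 : u - Real.tanh u ≤ u ^ 3 := by nlinarith [my_tanh_ge hu0.le]
    have h3 : Real.tanh u ≤ u := my_tanh_le_self hu0.le
    rw [abs_of_nonpos (by nlinarith)]
    have h4 : 2 * s * (u - Real.tanh u) ≤ 2 * s * u ^ 3 := by nlinarith
    have hs4 : s^4 = x^2 := by nlinarith [hs2]
    have h5 : 2 * s * u ^ 3 = r^3/4 * x^2 := by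
      rw [hu]; linear_combination (r^3/4) * hs4
    nlinarith
  · simp [G_of_zero]
  · -- positive side
    have hx' : x ≤ 1 / r^2 := (le_abs_self x).trans hx
    set s := Real.sqrt x with hs
    have hs0 : 0 < s := Real.sqrt_pos.2 h
    have hs2 : s^2 = x := Real.sq_sqrt h.le
    set u := s * r / 2 with hu
    have hu0 : 0 < u := by positivity
    have hu12 : u ≤ 1 / 2 := by
      have : s ≤ 1 / r := by
        rw [hs, show (1:ℝ)/r = Real.sqrt ((1/r)^2) by rw [Real.sqrt_sq (by positivity)]]
        apply Real.sqrt_le_sqrt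
        rw [div_pow]; simpa using hx'
      calc s * r / 2 ≤ (1/r) * r / 2 := by
            have := mul_le_mul_of_nonneg_right this hr.le
            linarith
        _ = 1 / 2 := by field_simp
    have htu : 0 ≤ Real.tan u - u := by
      have := Real.lt_tan hu0 (by linarith [Real.pi_gt_three])
      linarith
    have h1 : G x r - (-r) * x = -2 * s * (Real.tan u - u) := by
      rw [G_of_pos h r, ← hs, ← hu]
      nlinarith [hs2]
    rw [h1, abs_of_nonpos (by nlinarith)]
    have h2 : Real.tan u - u ≤ u ^ 3 := my_tan_sub_le hu0.le hu12
    have hs4 : s^4 = x^2 := by nlinarith [hs2]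
    have h5 : 2 * s * u ^ 3 = r^3/4 * x^2 := by
      rw [hu]; linear_combination (r^3/4) * hs4
    nlinarith

lemma hasDerivAt_G_zero {r : ℝ} (hr : 0 < r) : HasDerivAt (fun x => G x r) (-r) 0 := by
  rw [hasDerivAt_iff_isLittleO]
  simp only [G_of_zero, sub_zero, smul_eq_mul]
  have hbig : (fun x : ℝ => G x r - x * (-r)) =O[nhds 0] (fun x => x^2) := by
    rw [Asymptotics.isBigO_iff]
    refine ⟨r^3/4, ?_⟩
    rw [Metric.eventually_nhds_iff]
    refine ⟨1/r^2, by positivity, fun x hx => ?_⟩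
    rw [Real.dist_eq, sub_zero] at hx
    have := G_bound_near_zero hr (x := x) hx.le
    rw [show x * (-r) = (-r) * x by ring]
    calc ‖G x r - (-r) * x‖ ≤ r^3/4 * x^2 := this
      _ ≤ r^3/4 * ‖x^2‖ := by
          rw [Real.norm_eq_abs, abs_of_nonneg (sq_nonneg x)]
      _ = r^3/4 * ‖x^2‖ := rfl
  have hlit : (fun x : ℝ => x^2) =o[nhds 0] (fun x => x) := by
    rw [Asymptotics.isLittleO_iff]
    intro c hc
    rw [Metric.eventually_nhds_iff]
    refine ⟨c, hc, fun x hx => ?_⟩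
    rw [Real.dist_eq, sub_zero] at hx
    rw [Real.norm_eq_abs, Real.norm_eq_abs]
    have : |x^2| = |x| * |x| := by rw [← abs_mul]; ring_nf
    rw [this]
    nlinarith [abs_nonneg x]
  exact hbig.trans_isLittleO hlit


lemma Gd_zero (r : ℝ) : Gd r 0 = -r := by rw [Gd]; norm_num

lemma Gd_pos_eq {r k : ℝ} (hr : 0 < r) (hk : 0 < k) :
    Gd r k = -(r/2) * (Real.tan (Real.sqrt k * r / 2) / (Real.sqrt k * r / 2))
      - r/2 * (1 / Real.cos (Real.sqrt k * r / 2) ^ 2) := by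
  have hs : 0 < Real.sqrt k := Real.sqrt_pos.2 hk
  rw [Gd, if_pos hk]
  field_simp

lemma Gd_neg_eq {r k : ℝ} (hr : 0 < r) (hk : k < 0) :
    Gd r k = -(r/2) * (Real.tanh (Real.sqrt (-k) * r / 2) / (Real.sqrt (-k) * r / 2))
      - r/2 * (1 - Real.tanh (Real.sqrt (-k) * r / 2) ^ 2) := by
  have hs : 0 < Real.sqrt (-k) := Real.sqrt_pos.2 (by linarith)
  rw [Gd, if_neg (by linarith), if_neg (by linarith)]
  field_simp

lemma Gd_pos_le {r k : ℝ} (hr : 0 < r) (hk : 0 < k) (hk' : k < π^2/r^2) :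
    Gd r k ≤ -r := by
  have hs : 0 < Real.sqrt k := Real.sqrt_pos.2 hk
  have hu0 : 0 < Real.sqrt k * r / 2 := by positivity
  have hu2 : Real.sqrt k * r / 2 < π / 2 := sqrt_lt_pi_div hr hk hk'
  have hcos : 0 < Real.cos (Real.sqrt k * r / 2) :=
    Real.cos_pos_of_mem_Ioo ⟨by linarith [Real.pi_pos], hu2⟩
  have htan : Real.sqrt k * r / 2 < Real.tan (Real.sqrt k * r / 2) := Real.lt_tan hu0 hu2
  have h1 : 1 ≤ Real.tan (Real.sqrt k * r / 2) / (Real.sqrt k * r / 2) :=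
    (one_le_div hu0).2 htan.le
  have h2 : 1 ≤ 1 / Real.cos (Real.sqrt k * r / 2) ^ 2 := by
    rw [le_div_iff₀ (by positivity), one_mul]
    nlinarith [Real.cos_le_one (Real.sqrt k * r / 2)]
  rw [Gd_pos_eq hr hk]
  nlinarith

lemma Gd_neg_ge {r k : ℝ} (hr : 0 < r) (hk : k < 0) : -r ≤ Gd r k := by
  have hs : 0 < Real.sqrt (-k) := Real.sqrt_pos.2 (by linarith)
  have hu0 : 0 < Real.sqrt (-k) * r / 2 := by positivity
  have h1 : Real.tanh (Real.sqrt (-k) * r / 2) / (Real.sqrt (-k) * r / 2) ≤ 1 :=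
    (div_le_one hu0).2 (my_tanh_le_self hu0.le)
  have h2 : 1 - Real.tanh (Real.sqrt (-k) * r / 2) ^ 2 ≤ 1 := by
    nlinarith [sq_nonneg (Real.tanh (Real.sqrt (-k) * r / 2))]
  rw [Gd_neg_eq hr hk]
  nlinarith

lemma Gd_anti {r : ℝ} (hr : 0 < r) : AntitoneOn (Gd r) (Set.Iio (π^2/r^2)) := by
  intro a ha b hb hab
  simp only [Set.mem_Iio] at ha hb
  rcases lt_trichotomy a 0 with hA | hA | hA
  · rcases lt_trichotomy b 0 with hB | hB | hB
    · -- both negative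
      have hsa : 0 < Real.sqrt (-a) := Real.sqrt_pos.2 (by linarith)
      have hsb : 0 < Real.sqrt (-b) := Real.sqrt_pos.2 (by linarith)
      have hsba : Real.sqrt (-b) ≤ Real.sqrt (-a) := Real.sqrt_le_sqrt (by linarith)
      set ua := Real.sqrt (-a) * r / 2 with hua
      set ub := Real.sqrt (-b) * r / 2 with hub
      have hua0 : 0 < ua := by positivity
      have hub0 : 0 < ub := by positivity
      have hu : ub ≤ ua := by rw [hua, hub]; nlinarith
      have m1 : Real.tanh ua / ua ≤ Real.tanh ub / ub :=
        my_tanh_div_anti (Set.mem_Ioi.2 hub0) (Set.mem_Ioi.2 hua0) hu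
      have m2 : Real.tanh ub ≤ Real.tanh ua := my_tanh_mono.monotone hu
      have htb0 : 0 ≤ Real.tanh ub := by
        rw [Real.tanh_eq_sinh_div_cosh]
        exact div_nonneg (Real.sinh_nonneg_iff.2 hub0.le) (Real.cosh_pos _).le
      have m2' : Real.tanh ub ^ 2 ≤ Real.tanh ua ^ 2 := by nlinarith
      rw [Gd_neg_eq hr hA, Gd_neg_eq hr hB, ← hua, ← hub]
      nlinarith
    · subst hB
      rw [Gd_zero]
      exact Gd_neg_ge hr hA
    · exact (Gd_pos_le hr hB hb).trans (Gd_neg_ge hr hA)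
  · subst hA
    rcases eq_or_lt_of_le hab with rfl | hB
    · exact le_refl _
    · rw [Gd_zero]
      exact Gd_pos_le hr hB hb
  · have hB : 0 < b := lt_of_lt_of_le hA hab
    have hsa : 0 < Real.sqrt a := Real.sqrt_pos.2 hA
    have hsb : 0 < Real.sqrt b := Real.sqrt_pos.2 hB
    have hsab : Real.sqrt a ≤ Real.sqrt b := Real.sqrt_le_sqrt hab
    set ua := Real.sqrt a * r / 2 with hua
    set ub := Real.sqrt b * r / 2 with hub
    have hua0 : 0 < ua := by positivity
    have hub0 : 0 < ub := by positivity
    have hu : ua ≤ ub := by rw [hua, hub]; nlinarith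
    have hub2 : ub < π/2 := sqrt_lt_pi_div hr hB hb
    have hua2 : ua < π/2 := lt_of_le_of_lt hu hub2
    have m1 : Real.tan ua / ua ≤ Real.tan ub / ub :=
      my_tan_div_mono ⟨hua0, hua2⟩ ⟨hub0, hub2⟩ hu
    have m2 : 1 / Real.cos ua ^ 2 ≤ 1 / Real.cos ub ^ 2 := my_sec_sq_mono hua0 hu hub2
    rw [Gd_pos_eq hr hA, Gd_pos_eq hr hB, ← hua, ← hub]
    nlinarith

lemma G_concave {r : ℝ} (hr : 0 < r) :
    ConcaveOn ℝ (Set.Iio (π^2/r^2)) (fun k => G k r) := by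
  have hd : ∀ k ∈ Set.Iio (π^2/r^2), HasDerivAt (fun x => G x r) (Gd r k) k := by
    intro k hk
    rcases lt_trichotomy k 0 with h | rfl | h
    · exact hasDerivAt_G_neg hr h
    · rw [Gd_zero]; exact hasDerivAt_G_zero hr
    · exact hasDerivAt_G_pos hr h hk
  apply AntitoneOn.concaveOn_of_deriv (convex_Iio _)
  · intro k hk
    exact (hd k hk).continuousAt.continuousWithinAt
  · rw [interior_Iio]
    intro k hk
    exact (hd k hk).differentiableAt.differentiableWithinAt
  · rw [interior_Iio]
    intro a ha b hb hab
    rw [(hd a ha).deriv, (hd b hb).deriv]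
    exact Gd_anti hr ha hb hab

/-- The quaternion Kähler drift term `(4m−4)G(k₂,r) + 6G(k₁,2r)` is dominated by the
Riemannian drift term with the averaged Ricci lower bound `12k₁ + (4m−4)k₂` in real
dimension `4m`. -/
theorem quaternion_kahler_drift_comparison (m : ℕ) (hm : 2 ≤ m) (k₁ k₂ r : ℝ) (hr : 0 < r)
    (h₁ : 4 * k₁ < π ^ 2 / r ^ 2) (h₂ : k₂ < π ^ 2 / r ^ 2) :
    (4 * (m : ℝ) - 4) * G k₂ r + 6 * G k₁ (2 * r) ≤
      (4 * (m : ℝ) - 1) * G ((12 * k₁ + (4 * (m : ℝ) - 4) * k₂) / (4 * (m : ℝ) - 1)) r := by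
  have hm' : (2:ℝ) ≤ (m:ℝ) := by exact_mod_cast hm
  set N : ℝ := 4 * (m:ℝ) - 1 with hN
  set A : ℝ := 4 * (m:ℝ) - 4 with hA
  have hNpos : 0 < N := by rw [hN]; linarith
  have hAnn : 0 ≤ A := by rw [hA]; linarith
  have conc := G_concave hr
  have mem1 : (4 * k₁ : ℝ) ∈ Set.Iio (π^2/r^2) := Set.mem_Iio.2 h₁
  have mem2 : (k₂ : ℝ) ∈ Set.Iio (π^2/r^2) := Set.mem_Iio.2 h₂
  have hw1 : (0:ℝ) ≤ 3 / N := by positivity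
  have hw2 : (0:ℝ) ≤ A / N := by positivity
  have hsum : 3 / N + A / N = 1 := by
    field_simp
    rw [hN, hA]; ring
  have hjen := conc.2 mem1 mem2 hw1 hw2 hsum
  simp only [smul_eq_mul] at hjen
  have hpt : 3 / N * (4 * k₁) + A / N * k₂ = (12 * k₁ + A * k₂) / N := by
    field_simp; ring
  rw [hpt] at hjen
  have hdbl : G (4 * k₁) r = 2 * G k₁ (2 * r) := G_doubling k₁ r
  have hmul := mul_le_mul_of_nonneg_left hjen hNpos.le
  have hsimp : N * (3 / N * G (4 * k₁) r + A / N * G k₂ r)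
      = 3 * G (4 * k₁) r + A * G k₂ r := by
    field_simp
  rw [hsimp] at hmul
  rw [hdbl] at hmul
  linarith [hmul]
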